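/- Let (βₙ) be a sequence of subprobability measures on ℝ^d that totally disintegrates, i.e., for every r > 0, sup_{x ∈ ℝ^d} βₙ(B_r(x)) → 0 as n → ∞. Then for every bounded continuous function h : ℝ^d → ℝ vanishing at infinity, ∫∫ h(x - y) βₙ(dx) βₙ(dy) → 0 as n → ∞. -/

import Mathlib

open MeasureTheory Filter Metric
open scoped Topology ENNReal

/-- if a sequence of subprobability measures totally disintegrates, then
for every bounded continuous `h` vanishing at infinity the double integral of
`h (x - y)` tends to `0`. -/
theorem gmc_total_disintegration (d : ℕ)
    (B : ℕ → Measure (EuclideanSpace ℝ (Fin d))) [∀ n, IsFiniteMeasure (B n)]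
    (hsub : ∀ n, B n Set.univ ≤ 1)
    (hdis : ∀ r : ℝ, 0 < r →
      Tendsto (fun n => ⨆ x : EuclideanSpace ℝ (Fin d),
        ((B n) (Metric.ball x r)).toReal) atTop (𝓝 0))
    (h : EuclideanSpace ℝ (Fin d) → ℝ) (hc : Continuous h)
    (hb : ∃ C : ℝ, ∀ z, |h z| ≤ C)
    (hvanish : Tendsto h (cocompact (EuclideanSpace ℝ (Fin d))) (𝓝 0)) :
    Tendsto (fun n => ∫ x, ∫ y, h (x - y) ∂(B n) ∂(B n)) atTop (𝓝 0) := by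
  obtain ⟨C, hC⟩ := hb
  have hC0 : 0 ≤ C := le_trans (abs_nonneg _) (hC 0)
  rw [NormedAddCommGroup.tendsto_nhds_zero]
  intro ε hε
  -- choose R so that |h z| < ε/4 outside closedBall 0 R
  have hsmall : {z | |h z| < ε / 4} ∈ cocompact (EuclideanSpace ℝ (Fin d)) := by
    have := hvanish (Metric.ball_mem_nhds (0:ℝ) (by positivity : (0:ℝ) < ε/4))
    filter_upwards [this] with z hz
    simpa [Real.dist_eq] using hz
  rw [← Metric.cobounded_eq_cocompact,
    (Metric.hasBasis_cobounded_compl_closedBall (0 : EuclideanSpace ℝ (Fin d))).mem_iff] at hsmall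
  obtain ⟨R, -, hR⟩ := hsmall
  set r : ℝ := max R 0 + 1 with hr
  have hrpos : 0 < r := by positivity
  have hRr : R < r := lt_of_le_of_lt (le_max_left R 0) (by simp [hr])
  -- the sup sequence
  set S : ℕ → ℝ := fun n => ⨆ x : EuclideanSpace ℝ (Fin d), ((B n) (Metric.ball x r)).toReal
    with hS
  have hmass : ∀ n, ((B n) Set.univ).toReal ≤ 1 := fun n => by
    simpa using ENNReal.toReal_mono (by norm_num) (hsub n)
  have hbdd : ∀ n, BddAbove (Set.range fun x : EuclideanSpace ℝ (Fin d) =>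
      ((B n) (Metric.ball x r)).toReal) := fun n =>
    ⟨1, by
      rintro _ ⟨x, rfl⟩
      exact le_trans (ENNReal.toReal_mono (by norm_num)
        (le_trans (measure_mono (Set.subset_univ _)) (hsub n))) (by norm_num)⟩
  have hSle : ∀ n x, ((B n) (Metric.ball x r)).toReal ≤ S n := fun n x => le_ciSup (hbdd n) x
  have hS0 : ∀ n, 0 ≤ S n := fun n => le_trans ENNReal.toReal_nonneg (hSle n 0)
  -- inner bound
  have hinner : ∀ n (x : EuclideanSpace ℝ (Fin d)),
      ‖∫ y, h (x - y) ∂(B n)‖ ≤ C * S n + ε / 4 := by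
    intro n x
    have hmeas : AEStronglyMeasurable (fun y => h (x - y)) (B n) :=
      (hc.comp (continuous_const.sub continuous_id)).aestronglyMeasurable
    have hint : Integrable (fun y => h (x - y)) (B n) := by
      refine Integrable.mono' (integrable_const C) hmeas ?_
      filter_upwards with y
      simpa using hC (x - y)
    have hptwise : ∀ y, |h (x - y)| ≤
        (Metric.ball x r).indicator (fun _ => C) y + ε / 4 := by
      intro y
      by_cases hy : y ∈ Metric.ball x r
      · rw [Set.indicator_of_mem hy]
        linarith [hC (x - y), hε]
      · rw [Set.indicator_of_notMem hy]
        have : x - y ∈ (Metric.closedBall (0 : EuclideanSpace ℝ (Fin d)) R)ᶜ := by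
          simp only [Set.mem_compl_iff, Metric.mem_closedBall, not_le, dist_zero_right]
          have : r ≤ dist y x := not_lt.1 (fun hlt => hy (Metric.mem_ball.2 hlt))
          calc R < r := hRr
            _ ≤ dist y x := this
            _ = ‖x - y‖ := by rw [dist_comm, dist_eq_norm]
        have := hR this
        simp only [Set.mem_setOf_eq] at this
        linarith
    have hrhs_int : Integrable
        (fun y => (Metric.ball x r).indicator (fun _ => C) y + ε / 4) (B n) :=
      ((integrable_const C).indicator measurableSet_ball).add (integrable_const _)
    calc ‖∫ y, h (x - y) ∂(B n)‖ ≤ ∫ y, |h (x - y)| ∂(B n) := by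
          simpa [Real.norm_eq_abs] using norm_integral_le_integral_norm (fun y => h (x - y))
      _ ≤ ∫ y, ((Metric.ball x r).indicator (fun _ => C) y + ε / 4) ∂(B n) :=
          integral_mono hint.abs hrhs_int hptwise
      _ = ((B n) (Metric.ball x r)).toReal * C + (ε / 4) * ((B n) Set.univ).toReal := by
          rw [integral_add ((integrable_const C).indicator measurableSet_ball)
            (integrable_const _), integral_indicator_const _ measurableSet_ball,
            integral_const]
          simp [smul_eq_mul, mul_comm, measureReal_def]
      _ ≤ C * S n + ε / 4 := by
          have h1 : ((B n) (Metric.ball x r)).toReal * C ≤ C * S n := by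
            rw [mul_comm]
            exact mul_le_mul_of_nonneg_left (hSle n x) hC0
          have h2 : (ε / 4) * ((B n) Set.univ).toReal ≤ ε / 4 := by
            nlinarith [hmass n, ENNReal.toReal_nonneg (a := (B n) Set.univ), hε]
          linarith
  -- eventually C * S n < ε/2
  have hev : ∀ᶠ n in atTop, C * S n < ε / 2 := by
    have : Tendsto (fun n => C * S n) atTop (𝓝 0) := by
      simpa using (hdis r hrpos).const_mul C
    exact this.eventually (Filter.Tendsto.eventually_lt_const (by linarith) tendsto_id)
  filter_upwards [hev] with n hn
  have houter : ‖∫ x, ∫ y, h (x - y) ∂(B n) ∂(B n)‖ ≤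
      (C * S n + ε / 4) * ((B n) Set.univ).toReal :=
    norm_integral_le_of_norm_le_const (Filter.Eventually.of_forall (hinner n))
  have hnn : 0 ≤ C * S n + ε / 4 := by
    have := mul_nonneg hC0 (hS0 n); linarith
  calc ‖∫ x, ∫ y, h (x - y) ∂(B n) ∂(B n)‖
      ≤ (C * S n + ε / 4) * ((B n) Set.univ).toReal := houter
    _ ≤ C * S n + ε / 4 := by
        nlinarith [hmass n, ENNReal.toReal_nonneg (a := (B n) Set.univ)]
    _ < ε := by linarith
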